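/- arXiv:math/0302159 — 2 statements merged into one kernel-verified Lean document; each statement's English description precedes it below -/
import Mathlib

section
/- Let (Ω, μ) be a measure space, N ≥ 1, 1 < p < ∞, p' = p/(p−1), and let a : Ω × ℝ^N → ℝ^N be a Carathéodory function satisfying the growth condition |a(x, ξ)| ≤ α(k(x) + |ξ|^{p−1}) with α ≥ 0, k ∈ L^{p'}(Ω, μ), k ≥ 0, and the strict monotonicity condition (a(x, ξ) − a(x, η)) · (ξ − η) > 0 for a.e. x ∈ Ω and all ξ ≠ η in ℝ^N. If F, G ∈ L^p(Ω, μ; ℝ^N) satisfy ∫_Ω (a(x, F(x)) − a(x, G(x))) · (F(x) − G(x)) dμ ≤ 0, then F = G μ-a.e. on Ω. -/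
open MeasureTheory

lemma caratheodory_aesm {Ω : Type*} [MeasurableSpace Ω] (μ : Measure Ω) {N : ℕ}
    (a : Ω → EuclideanSpace ℝ (Fin N) → EuclideanSpace ℝ (Fin N))
    (hmeas : ∀ ξ, Measurable fun x => a x ξ)
    (hcont : ∀ᵐ x ∂μ, Continuous (a x))
    {F : Ω → EuclideanSpace ℝ (Fin N)} (hF : AEStronglyMeasurable F μ) :
    AEStronglyMeasurable (fun x => a x (F x)) μ := by
  obtain ⟨F', hF'sm, hFF'⟩ := hF
  have happrox := hF'sm.tendsto_approx
  have hmeasn : ∀ n, Measurable fun x => a x (hF'sm.approx n x) := fun n =>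
    SimpleFunc.measurable_bind (hF'sm.approx n) (fun ξ x => a x ξ) (fun ξ => hmeas ξ)
  have htend : ∀ᵐ x ∂μ, Filter.Tendsto (fun n => a x (hF'sm.approx n x))
      Filter.atTop (nhds (a x (F' x))) := by
    filter_upwards [hcont] with x hx
    exact (hx.tendsto _).comp (happrox x)
  have h1 : AEMeasurable (fun x => a x (F' x)) μ :=
    aemeasurable_of_tendsto_metrizable_ae _ (fun n => (hmeasn n).aemeasurable) htend
  refine h1.aestronglyMeasurable.congr ?_
  filter_upwards [hFF'] with x hx
  rw [hx]

lemma memLp_of_growth_bound {Ω : Type*} [MeasurableSpace Ω] (μ : Measure Ω) {N : ℕ}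
    (p : ℝ) (hp : 1 < p)
    (α : ℝ) (k : Ω → ℝ) (hk : MemLp k (ENNReal.ofReal (p / (p - 1))) μ)
    {u : Ω → EuclideanSpace ℝ (Fin N)} (hu : AEStronglyMeasurable u μ)
    {F : Ω → EuclideanSpace ℝ (Fin N)} (hF : MemLp F (ENNReal.ofReal p) μ)
    (hb : ∀ᵐ x ∂μ, ‖u x‖ ≤ α * (k x + ‖F x‖ ^ (p - 1))) :
    MemLp u (ENNReal.ofReal (p / (p - 1))) μ := by
  have hp1 : (0:ℝ) < p - 1 := by linarith
  have hFr : MemLp (fun x => ‖F x‖ ^ (p - 1)) (ENNReal.ofReal (p / (p - 1))) μ := by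
    have := hF.norm_rpow_div (ENNReal.ofReal (p - 1))
    rw [ENNReal.toReal_ofReal hp1.le] at this
    rwa [ENNReal.ofReal_div_of_pos hp1]
  have hg : MemLp (fun x => α * (k x + ‖F x‖ ^ (p - 1))) (ENNReal.ofReal (p / (p - 1))) μ :=
    (hk.add hFr).const_mul α
  refine hg.of_le hu ?_
  filter_upwards [hb] with x hx
  exact hx.trans (le_abs_self _)

/-- For a Carathéodory function `a` satisfying the growth condition and strict
monotonicity `(a(x, ξ) - a(x, η)) · (ξ - η) > 0` for `ξ ≠ η`, if `F, G ∈ L^p(Ω; ℝ^N)` and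
`∫ (a(x, F(x)) - a(x, G(x))) · (F(x) - G(x)) dμ ≤ 0`, then `F = G` μ-a.e. -/
theorem ae_eq_of_integral_strict_monotone_nonpos
    {Ω : Type*} [MeasurableSpace Ω] (μ : Measure Ω)
    (N : ℕ) (hN : 1 ≤ N) (p : ℝ) (hp : 1 < p)
    (a : Ω → EuclideanSpace ℝ (Fin N) → EuclideanSpace ℝ (Fin N))
    (hmeas : ∀ ξ : EuclideanSpace ℝ (Fin N), Measurable fun x => a x ξ)
    (hcont : ∀ᵐ x ∂μ, Continuous (a x))
    (α : ℝ) (hα : 0 ≤ α)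
    (k : Ω → ℝ) (hk : MemLp k (ENNReal.ofReal (p / (p - 1))) μ) (hknn : ∀ x, 0 ≤ k x)
    (hgrowth : ∀ᵐ x ∂μ, ∀ ξ : EuclideanSpace ℝ (Fin N),
      ‖a x ξ‖ ≤ α * (k x + ‖ξ‖ ^ (p - 1)))
    (hmono : ∀ᵐ x ∂μ, ∀ ξ η : EuclideanSpace ℝ (Fin N), ξ ≠ η →
      0 < (inner ℝ (a x ξ - a x η) (ξ - η) : ℝ))
    (F G : Ω → EuclideanSpace ℝ (Fin N))
    (hF : MemLp F (ENNReal.ofReal p) μ) (hG : MemLp G (ENNReal.ofReal p) μ)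
    (hint : (∫ x, (inner ℝ (a x (F x) - a x (G x)) (F x - G x) : ℝ) ∂μ) ≤ 0) :
    F =ᵐ[μ] G := by
  have hp0 : (0:ℝ) < p := by linarith
  have hp1 : (0:ℝ) < p - 1 := by linarith
  set Q := ENNReal.ofReal (p / (p - 1)) with hQdef
  set P := ENNReal.ofReal p with hPdef
  -- measurability of compositions
  have haF : AEStronglyMeasurable (fun x => a x (F x)) μ :=
    caratheodory_aesm μ a hmeas hcont hF.1
  have haG : AEStronglyMeasurable (fun x => a x (G x)) μ :=
    caratheodory_aesm μ a hmeas hcont hG.1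
  -- MemLp of compositions
  have hmF : MemLp (fun x => a x (F x)) Q μ := by
    refine memLp_of_growth_bound μ p hp α k hk haF hF ?_
    filter_upwards [hgrowth] with x hx using hx (F x)
  have hmG : MemLp (fun x => a x (G x)) Q μ := by
    refine memLp_of_growth_bound μ p hp α k hk haG hG ?_
    filter_upwards [hgrowth] with x hx using hx (G x)
  have hw : MemLp (fun x => a x (F x) - a x (G x)) Q μ := hmF.sub hmG
  have hv : MemLp (fun x => F x - G x) P μ := hF.sub hG
  -- Hölder : product of norms is integrable
  have hQP : (1:ENNReal) / 1 = 1 / Q + 1 / P := by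
    rw [hQdef, hPdef, one_div, one_div, one_div,
      ← ENNReal.ofReal_inv_of_pos (show (0:ℝ) < p / (p - 1) by positivity),
      ← ENNReal.ofReal_inv_of_pos hp0, ← ENNReal.ofReal_add (by positivity) (by positivity),
      inv_one]
    rw [show (p / (p - 1))⁻¹ + p⁻¹ = 1 by field_simp; ring]
    simp
  have hprod : MemLp (fun x => ‖a x (F x) - a x (G x)‖ * ‖F x - G x‖) 1 μ := by
    have := (hv.norm).smul (hw.norm) (r := 1) (hpqr := ⟨by simpa [one_div] using hQP.symm⟩)
    simpa [smul_eq_mul, Pi.mul_def] using this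
  have hgint : Integrable (fun x => ‖a x (F x) - a x (G x)‖ * ‖F x - G x‖) μ :=
    memLp_one_iff_integrable.mp hprod
  -- integrand
  set f : Ω → ℝ := fun x => (inner ℝ (a x (F x) - a x (G x)) (F x - G x) : ℝ) with hfdef
  have hfsm : AEStronglyMeasurable f μ := (hw.1.inner hv.1)
  have hfint : Integrable f μ := by
    refine hgint.mono' hfsm ?_
    filter_upwards with x
    exact (norm_inner_le_norm _ _)
  have hnn : 0 ≤ᵐ[μ] f := by
    filter_upwards [hmono] with x hx
    by_cases h : F x = G x
    · simp [hfdef, h]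
    · exact (hx (F x) (G x) h).le
  have hzero : (∫ x, f x ∂μ) = 0 := le_antisymm hint (integral_nonneg_of_ae hnn)
  have hfz : f =ᵐ[μ] 0 := (integral_eq_zero_iff_of_nonneg_ae hnn hfint).mp hzero
  filter_upwards [hmono, hfz] with x hx hz
  by_contra h
  exact absurd hz (ne_of_gt (hx (F x) (G x) h))
end

section
/- Let b : ℝ^N → ℝ^N be continuous and strictly monotone, i.e. (b(ξ) − b(η)) · (ξ − η) > 0 for all ξ ≠ η in ℝ^N. Let (ξ_n) be a bounded sequence in ℝ^N and ξ ∈ ℝ^N such that (b(ξ_n) − b(ξ)) · (ξ_n − ξ) → 0 as n → ∞. Then ξ_n → ξ. -/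
open Filter

/-- If `b : ℝ^N → ℝ^N` is continuous and strictly monotone, `(ξ_n)` is a bounded sequence
and `(b(ξ_n) - b(ξ)) · (ξ_n - ξ) → 0`, then `ξ_n → ξ`. -/
theorem tendsto_of_strict_monotone_pairing
    (N : ℕ) (b : EuclideanSpace ℝ (Fin N) → EuclideanSpace ℝ (Fin N))
    (hb : Continuous b)
    (hmono : ∀ ξ η : EuclideanSpace ℝ (Fin N), ξ ≠ η →
      0 < (inner ℝ (b ξ - b η) (ξ - η) : ℝ))
    (ξ : ℕ → EuclideanSpace ℝ (Fin N)) (C : ℝ) (hbound : ∀ n, ‖ξ n‖ ≤ C)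
    (ξ₀ : EuclideanSpace ℝ (Fin N))
    (hconv : Tendsto (fun n => (inner ℝ (b (ξ n) - b ξ₀) (ξ n - ξ₀) : ℝ)) atTop (nhds 0)) :
    Tendsto ξ atTop (nhds ξ₀) := by
  apply tendsto_of_subseq_tendsto
  intro ns hns
  have hbdd : Bornology.IsBounded (Metric.closedBall (0 : EuclideanSpace ℝ (Fin N)) C) :=
    Metric.isBounded_closedBall
  have hmem : ∀ n, ξ (ns n) ∈ Metric.closedBall (0 : EuclideanSpace ℝ (Fin N)) C := fun n => by
    simpa [Metric.mem_closedBall, dist_zero_right] using hbound (ns n)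
  obtain ⟨η, -, φ, hφ, hηlim⟩ := tendsto_subseq_of_bounded hbdd hmem
  refine ⟨φ, ?_⟩
  by_cases hηξ : η = ξ₀
  · rwa [hηξ] at hηlim
  · exfalso
    -- pairing along the subsequence tends to inner (b η - b ξ₀) (η - ξ₀)
    have hcont : Continuous fun x : EuclideanSpace ℝ (Fin N) =>
        (inner ℝ (b x - b ξ₀) (x - ξ₀) : ℝ) :=
      Continuous.inner (hb.sub continuous_const) (continuous_id.sub continuous_const)
    have h1 : Tendsto (fun n => (inner ℝ (b (ξ (ns (φ n))) - b ξ₀) (ξ (ns (φ n)) - ξ₀) : ℝ))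
        atTop (nhds (inner ℝ (b η - b ξ₀) (η - ξ₀) : ℝ)) := hcont.continuousAt.tendsto.comp hηlim
    have h2 : Tendsto (fun n => (inner ℝ (b (ξ (ns (φ n))) - b ξ₀) (ξ (ns (φ n)) - ξ₀) : ℝ))
        atTop (nhds 0) := hconv.comp (hns.comp hφ.tendsto_atTop)
    have := tendsto_nhds_unique h1 h2
    exact absurd this (ne_of_gt (hmono η ξ₀ hηξ))
end
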